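/- Let k_0, k_1, k_2: ℝ → ℝ be smooth functions. Define κ_2 = −k_2, κ_1 = 2k_2' − k_1, κ_0 = k_1' − k_2'' − k_0, and define the 4×4 matrix-valued functions K̂ = [[0,0,0,−k_0],[1,0,0,−k_1],[0,1,0,−k_2],[0,0,1,0]], K = [[0,κ_2,κ_1,κ_0],[1,0,0,0],[0,1,0,0],[0,0,1,0]], and g = [[1,0,k_2,k_1−k_2'],[0,1,0,k_2],[0,0,1,0],[0,0,0,1]]. Then g'(x) + K̂(x)g(x) = g(x)K(x) for all x ∈ ℝ. -/

import Mathlib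

/-- The gauge matrix `g` in the `ℝP³` case. -/
noncomputable def g13 (k1 k2 : ℝ → ℝ) (t : ℝ) : Matrix (Fin 4) (Fin 4) ℝ :=
  !![1, 0, k2 t, k1 t - deriv k2 t;
     0, 1, 0, k2 t;
     0, 0, 1, 0;
     0, 0, 0, 1]

/-- The Wilczynski Maurer–Cartan matrix `K̂` in the `ℝP³` case. -/
noncomputable def Khat13 (k0 k1 k2 : ℝ → ℝ) (t : ℝ) : Matrix (Fin 4) (Fin 4) ℝ :=
  !![0, 0, 0, -k0 t;
     1, 0, 0, -k1 t;
     0, 1, 0, -k2 t;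
     0, 0, 1, 0]

/-- The canonical matrix `K` in the `ℝP³` case, with `κ₂ = −k₂`, `κ₁ = 2k₂' − k₁`,
`κ₀ = k₁' − k₂'' − k₀`. -/
noncomputable def K13 (k0 k1 k2 : ℝ → ℝ) (t : ℝ) : Matrix (Fin 4) (Fin 4) ℝ :=
  !![0, -k2 t, 2 * deriv k2 t - k1 t, deriv k1 t - deriv (deriv k2) t - k0 t;
     1, 0, 0, 0;
     0, 1, 0, 0;
     0, 0, 1, 0]

/-- For smooth `k₀, k₁, k₂ : ℝ → ℝ`, the explicit gauge relation
`g'(x) + K̂(x)g(x) = g(x)K(x)` holds for all `x ∈ ℝ`. -/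
theorem stmt_13 (k0 k1 k2 : ℝ → ℝ) (h0 : ContDiff ℝ (⊤ : ℕ∞) k0)
    (h1 : ContDiff ℝ (⊤ : ℕ∞) k1) (h2 : ContDiff ℝ (⊤ : ℕ∞) k2) :
    ∀ x : ℝ,
      (Matrix.of fun i j : Fin 4 => deriv (fun t => g13 k1 k2 t i j) x)
          + Khat13 k0 k1 k2 x * g13 k1 k2 x
        = g13 k1 k2 x * K13 k0 k1 k2 x := by
  intro x
  have hd1 : Differentiable ℝ k1 := h1.differentiable (by simp)
  have hd2 : Differentiable ℝ k2 := h2.differentiable (by simp)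
  have hd2' : Differentiable ℝ (deriv k2) :=
    (contDiff_infty_iff_deriv.mp h2).2.differentiable (by simp)
  ext i j
  fin_cases i <;> fin_cases j <;>
    simp [g13, Khat13, K13, Matrix.mul_apply, Fin.sum_univ_four,
      deriv_fun_sub (hd1 x) (hd2' x), hd1, hd2', hd2, Matrix.vecHead, Matrix.vecTail] <;> ring
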